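/- arXiv:2109.13688 — 3 statements merged into one kernel-verified Lean document; each statement's English description precedes it below -/
import Mathlib

section
/- The unilateral shift S on ℓ²(ℕ), defined by (Sx)(n+1) = x(n) and (Sx)(0) = 0, has no square root: there is no bounded operator A on ℓ²(ℕ) with A² = S. -/
theorem stmt_7 (S : lp (fun _ : ℕ => ℂ) 2 →L[ℂ] lp (fun _ : ℕ => ℂ) 2)
    (hS1 : ∀ (x : lp (fun _ : ℕ => ℂ) 2) (n : ℕ), (S x : ∀ _ : ℕ, ℂ) (n + 1) = (x : ∀ _ : ℕ, ℂ) n)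
    (hS0 : ∀ x : lp (fun _ : ℕ => ℂ) 2, (S x : ∀ _ : ℕ, ℂ) 0 = 0) :
    ¬ ∃ A : lp (fun _ : ℕ => ℂ) 2 →L[ℂ] lp (fun _ : ℕ => ℂ) 2, A * A = S := by
  rintro ⟨A, hA⟩
  have hA2 : ∀ x, A (A x) = S x := by
    intro x
    rw [← hA]; rfl
  -- S is injective
  have hSinj : Function.Injective S := by
    intro x y hxy
    apply lp.ext
    funext n
    have := congrArg (fun z : lp (fun _ : ℕ => ℂ) 2 => (z : ∀ _ : ℕ, ℂ) (n + 1)) hxy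
    simpa [hS1] using this
  have hAinj : Function.Injective A := by
    intro x y hxy
    apply hSinj
    rw [← hA2, ← hA2, hxy]
  -- every y with y 0 = 0 is in the range of S
  have hranS : ∀ y : lp (fun _ : ℕ => ℂ) 2, (y : ∀ _ : ℕ, ℂ) 0 = 0 →
      ∃ x, S x = y := by
    intro y hy
    have hmem : Memℓp (fun n : ℕ => (y : ∀ _ : ℕ, ℂ) (n + 1)) 2 := by
      apply memℓp_gen
      have hs : Summable (fun n : ℕ => ‖(y : ∀ _ : ℕ, ℂ) n‖ ^ (2 : ENNReal).toReal) :=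
        (memℓp_gen_iff (by norm_num)).1 (lp.memℓp y)
      exact hs.comp_injective (fun a b h => by omega)
    refine ⟨⟨_, hmem⟩, ?_⟩
    apply lp.ext
    funext n
    cases n with
    | zero => rw [hS0, hy]
    | succ n => rw [hS1]
  -- e0
  set e0 : lp (fun _ : ℕ => ℂ) 2 := lp.single 2 0 1 with he0
  have he0_0 : (e0 : ∀ _ : ℕ, ℂ) 0 = 1 := lp.single_apply_self 2 0 1
  have he0_succ : ∀ n : ℕ, (e0 : ∀ _ : ℕ, ℂ) (n + 1) = 0 :=
    fun n => lp.single_apply_ne 2 0 1 (by omega)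
  have hSnot : ∀ x, S x ≠ e0 := by
    intro x hx
    have : (S x : ∀ _ : ℕ, ℂ) 0 = 1 := by rw [hx, he0_0]
    rw [hS0] at this
    exact one_ne_zero this.symm
  -- key: anything in range of A with nonzero 0th coordinate gives e0 ∈ range A
  have hkey : ∀ x : lp (fun _ : ℕ => ℂ) 2, (A x : ∀ _ : ℕ, ℂ) 0 ≠ 0 →
      ∃ a, A a = e0 := by
    intro x hc
    set c := (A x : ∀ _ : ℕ, ℂ) 0 with hcdef
    set z := A x - c • e0 with hz
    have hz0 : (z : ∀ _ : ℕ, ℂ) 0 = 0 := by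
      show (A x : ∀ _ : ℕ, ℂ) 0 - c * (e0 : ∀ _ : ℕ, ℂ) 0 = 0
      simp [he0_0, hcdef]
    obtain ⟨w, hw⟩ := hranS z hz0
    refine ⟨c⁻¹ • (x - A w), ?_⟩
    have : A (x - A w) = c • e0 := by
      rw [map_sub, hA2, hw, hz]
      abel
    rw [map_smul, this, smul_smul, inv_mul_cancel₀ hc, one_smul]
  by_cases h : ∃ a, A a = e0
  · -- A surjective, hence S surjective, contradiction
    obtain ⟨a, ha⟩ := h
    have hAs : Function.Surjective A := by
      intro y
      set c := (y : ∀ _ : ℕ, ℂ) 0 with hcdef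
      have hz0 : ((y - c • e0 : lp (fun _ : ℕ => ℂ) 2) : ∀ _ : ℕ, ℂ) 0 = 0 := by
        show (y : ∀ _ : ℕ, ℂ) 0 - c * (e0 : ∀ _ : ℕ, ℂ) 0 = 0
        simp [he0_0, hcdef]
      obtain ⟨w, hw⟩ := hranS _ hz0
      refine ⟨c • a + A w, ?_⟩
      rw [map_add, map_smul, ha, hA2, hw]
      abel
    obtain ⟨u, hu⟩ := hAs e0
    obtain ⟨v, hv⟩ := hAs u
    exact hSnot v (by rw [← hA2, hv, hu])
  · -- then (A x) 0 = 0 always, A surjective onto ker, contradiction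
    push_neg at h
    have hAz : ∀ x, (A x : ∀ _ : ℕ, ℂ) 0 = 0 := by
      intro x
      by_contra hc
      obtain ⟨a, ha⟩ := hkey x hc
      exact h a ha
    have hAs : Function.Surjective A := by
      intro y
      obtain ⟨w, hw⟩ := hranS (A y) (hAz y)
      exact ⟨w, hAinj ((hA2 w).trans hw)⟩
    obtain ⟨u, hu⟩ := hAs e0
    exact h u hu
end

section
/- The function f(z) = 1 + z + exp((z+1)/(z-1)) on the open unit disk has real part bounded below by a positive constant, and in particular f has no zeros in the disk. -/
set_option maxHeartbeats 1000000

open Complex in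
lemma stmt_11_key (z : ℂ) (hz : z ∈ Metric.ball (0 : ℂ) 1) :
    (3/10 : ℝ) ≤ (1 + z + Complex.exp ((z + 1) / (z - 1))).re := by
  have hz1 : ‖z‖ < 1 := by simpa using hz
  set x := z.re with hx
  set y := z.im with hy
  have hxy : x ^ 2 + y ^ 2 < 1 := by
    have h := Complex.sq_norm z
    rw [Complex.normSq_apply] at h
    nlinarith [norm_nonneg z]
  have hxle : |x| ≤ ‖z‖ := Complex.abs_re_le_norm z
  have hx1 : -1 < x := by
    have h := (abs_lt.mp (lt_of_le_of_lt hxle hz1)).1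
    linarith
  set s : ℝ := (x - 1) ^ 2 + y ^ 2 with hsdef
  have hs0 : 0 < s := by nlinarith
  have hzne : z - 1 ≠ 0 := by
    intro h
    have : z = 1 := by linear_combination h
    rw [this] at hz1; simp at hz1
  have hns : Complex.normSq (z - 1) = s := by
    rw [Complex.normSq_apply]; simp [Complex.sub_re, Complex.sub_im]; ring
  have hwre : ((z + 1) / (z - 1)).re = (x ^ 2 + y ^ 2 - 1) / s := by
    rw [Complex.div_re, hns]
    simp [Complex.add_re, Complex.add_im, Complex.sub_re, Complex.sub_im]
    ring
  have hwim : ((z + 1) / (z - 1)).im = (-2 * y) / s := by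
    rw [Complex.div_im, hns]
    simp [Complex.add_re, Complex.add_im, Complex.sub_re, Complex.sub_im]
    ring
  have hre : (1 + z + Complex.exp ((z + 1) / (z - 1))).re
      = 1 + x + Real.exp ((x ^ 2 + y ^ 2 - 1) / s) * Real.cos ((-2 * y) / s) := by
    rw [Complex.add_re, Complex.add_re, Complex.exp_re, hwre, hwim]
    simp [hx]
  rw [hre]
  set a : ℝ := (x ^ 2 + y ^ 2 - 1) / s with ha
  set b : ℝ := (-2 * y) / s with hb
  have ha0 : a ≤ 0 := div_nonpos_of_nonpos_of_nonneg (by linarith) hs0.le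
  have hexp1 : Real.exp a ≤ 1 := Real.exp_le_one_iff.mpr ha0
  have hexp0 : 0 < Real.exp a := Real.exp_pos a
  rcases le_or_gt x (-1/2) with hxc | hxc
  · -- x ≤ -1/2 : near -1, exponential term is close to 1
    have hy2 : y ^ 2 ≤ 3/4 := by nlinarith
    have hs94 : (9:ℝ)/4 ≤ s := by nlinarith
    have hta : -(4/9 : ℝ) ≤ a := by
      rw [ha, le_div_iff₀ hs0]
      nlinarith
    have hexp : (5/9 : ℝ) ≤ Real.exp a := by
      have := Real.add_one_le_exp a
      linarith
    have hb2 : b ^ 2 ≤ 16/27 := by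
      rw [hb, div_pow]
      rw [div_le_iff₀ (by positivity)]
      nlinarith
    have hcos : (19/27 : ℝ) ≤ Real.cos b := by
      have := Real.one_sub_sq_div_two_le_cos (x := b)
      linarith
    have hprod : (95/243 : ℝ) ≤ Real.exp a * Real.cos b := by
      calc (95/243 : ℝ) = (5/9) * (19/27) := by norm_num
        _ ≤ Real.exp a * Real.cos b := by
            apply mul_le_mul hexp hcos (by norm_num) hexp0.le
    linarith
  · rcases le_or_gt 0 (Real.cos b) with hc | hc
    · -- cos b ≥ 0
      nlinarith
    · -- cos b < 0 forces x close to 1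
      have hpi : Real.pi / 2 < |b| := by
        by_contra h
        push_neg at h
        exact absurd (Real.cos_nonneg_of_mem_Icc ⟨neg_le_of_abs_le h, le_of_abs_le h⟩)
          (not_le.mpr hc)
      have hyne : y ≠ 0 := by
        intro h
        rw [hb, h] at hc
        simp at hc
        linarith [Real.cos_zero ▸ hc]
      have habs : |b| = 2 * |y| / s := by
        rw [hb, abs_div, _root_.abs_of_pos hs0, abs_mul]
        norm_num
      have hamgm : 2 * (1 - x) * |y| ≤ s := by
        have h1x : 0 < 1 - x := by nlinarith
        nlinarith [sq_nonneg (|y| - (1 - x)), _root_.sq_abs y]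
      have hy0 : 0 < |y| := abs_pos.mpr hyne
      have hxbig : 1 - 2 / Real.pi < x := by
        have hpipos := Real.pi_pos
        rw [habs] at hpi
        have h2 : Real.pi / 2 * s < 2 * |y| := by
          rwa [lt_div_iff₀ hs0] at hpi
        have h3 : Real.pi / 2 * (2 * (1 - x) * |y|) < 2 * |y| := by
          nlinarith
        have h4 : Real.pi * (1 - x) < 2 := by
          nlinarith
        rw [sub_lt_iff_lt_add, ← sub_lt_iff_lt_add', lt_div_iff₀ hpipos]
        nlinarith
      have hpi3 : (3 : ℝ) < Real.pi := Real.pi_gt_three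
      have h2pi : 2 / Real.pi ≤ 7/10 := by
        rw [div_le_iff₀ Real.pi_pos]
        nlinarith
      have hcosm : -1 ≤ Real.cos b := Real.neg_one_le_cos b
      have : -1 ≤ Real.exp a * Real.cos b := by nlinarith
      linarith

open Metric in
theorem stmt_11 :
    ∃ m : ℝ, 0 < m ∧
      (∀ z ∈ ball (0 : ℂ) 1, m ≤ (1 + z + Complex.exp ((z + 1) / (z - 1))).re) ∧
      ∀ z ∈ ball (0 : ℂ) 1, 1 + z + Complex.exp ((z + 1) / (z - 1)) ≠ 0 := by
  refine ⟨3/10, by norm_num, fun z hz => stmt_11_key z hz, fun z hz h0 => ?_⟩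
  have := stmt_11_key z hz
  rw [h0] at this
  simp at this
  linarith
end

section
/- Formally, (A²)_{ij} = 1/(i+1) for i ≥ j: the matrix A with A_{ij} = binom(i,j) Σ_{ℓ=0}^{i-j} (-1)^ℓ (ℓ+j+1)^{-1/2} binom(i-j,ℓ) (and 0 for i<j) squares to the Cesàro matrix C with C_{ij} = 1/(i+1) for i ≥ j and 0 otherwise, where the matrix product is the finite sum Σ_{k=j}^{i} A_{ik} A_{kj}. -/
open Finset

/-- The entries of the lower-triangular square root of the Cesàro matrix. -/
noncomputable def cesaroRootEntry (i j : ℕ) : ℝ :=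
  if j ≤ i then
    (Nat.choose i j : ℝ) *
      ∑ l ∈ Finset.range (i - j + 1),
        (-1 : ℝ) ^ l * (1 / Real.sqrt ((l : ℝ) + j + 1)) * (Nat.choose (i - j) l : ℝ)
  else 0

/-- signed binomial (difference) matrix entry -/
noncomputable def dEnt (i k : ℕ) : ℝ :=
  if k ≤ i then (-1 : ℝ) ^ k * (Nat.choose i k : ℝ) else 0

lemma sum_delta (f : ℕ → ℝ) (i j : ℕ) :
    ∑ k ∈ Finset.range (i + 1), dEnt i k * f k * dEnt k j
      = if j ≤ i then
          (Nat.choose i j : ℝ) *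
            ∑ l ∈ Finset.range (i - j + 1),
              (-1 : ℝ) ^ l * f (j + l) * (Nat.choose (i - j) l : ℝ)
        else 0 := by
  by_cases hij : j ≤ i
  · rw [if_pos hij]
    have h1 : ∑ k ∈ Finset.range (i + 1), dEnt i k * f k * dEnt k j
        = ∑ k ∈ Finset.Icc j i, dEnt i k * f k * dEnt k j := by
      rw [Finset.range_eq_Ico, ← Finset.Ico_add_one_right_eq_Icc]
      symm
      apply Finset.sum_subset
      · intro k hk
        simp only [Finset.mem_Icc, Finset.mem_Ico] at *
        omega
      · intro k hk hk'
        simp only [Finset.mem_Icc, Finset.mem_Ico] at *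
        have : ¬ j ≤ k := by omega
        simp [dEnt, this]
    rw [h1]
    have h2 : Finset.Icc j i = Finset.map ⟨fun l => j + l, add_right_injective j⟩
        (Finset.range (i - j + 1)) := by
      ext k
      simp only [Finset.mem_Icc, Finset.mem_map, Finset.mem_range, Function.Embedding.coeFn_mk]
      constructor
      · rintro ⟨h, h'⟩; exact ⟨k - j, by omega, (show j + (k - j) = k by omega)⟩
      · rintro ⟨l, hl, rfl⟩; exact ⟨Nat.le_add_right j l, (by omega : j + l ≤ i)⟩
    rw [h2, Finset.sum_map, Finset.mul_sum]
    apply Finset.sum_congr rfl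
    intro l hl
    simp only [Finset.mem_range, Function.Embedding.coeFn_mk] at *
    have hjl : j + l ≤ i := by omega
    have hjjl : j ≤ j + l := by omega
    rw [dEnt, if_pos hjl, dEnt, if_pos hjjl]
    have hch : (Nat.choose i (j + l) : ℝ) * (Nat.choose (j + l) j : ℝ)
        = (Nat.choose i j : ℝ) * (Nat.choose (i - j) l : ℝ) := by
      rw [← Nat.cast_mul, ← Nat.cast_mul, Nat.choose_mul hjjl]
      congr 2
      · congr 1
        omega
    have : (-1 : ℝ) ^ (j + l) * (-1 : ℝ) ^ j = (-1 : ℝ) ^ l := by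
      rw [pow_add, mul_assoc, mul_comm ((-1:ℝ)^l), ← mul_assoc, ← pow_add, ← two_mul,
        pow_mul]
      norm_num
    calc (-1 : ℝ) ^ (j + l) * (Nat.choose i (j + l) : ℝ) * f (j + l) *
          ((-1 : ℝ) ^ j * (Nat.choose (j + l) j : ℝ))
        = ((-1 : ℝ) ^ (j + l) * (-1 : ℝ) ^ j) *
            ((Nat.choose i (j + l) : ℝ) * (Nat.choose (j + l) j : ℝ)) * f (j + l) := by ring
      _ = (-1:ℝ)^l * ((Nat.choose i j : ℝ) * (Nat.choose (i - j) l : ℝ)) * f (j+l) := by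
          rw [this, hch]
      _ = (Nat.choose i j : ℝ) * ((-1 : ℝ) ^ l * f (j + l) * (Nat.choose (i - j) l : ℝ)) := by
          ring
  · rw [if_neg hij]
    apply Finset.sum_eq_zero
    intro k hk
    simp only [Finset.mem_range] at hk
    have : ¬ j ≤ k := by omega
    simp [dEnt, this]

lemma delta_mul (i j : ℕ) :
    ∑ k ∈ Finset.range (i + 1), dEnt i k * dEnt k j
      = if i = j then 1 else 0 := by
  have := sum_delta (fun _ => (1 : ℝ)) i j
  simp only [mul_one] at this
  rw [this]
  by_cases hij : j ≤ i
  · rw [if_pos hij]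
    have : ∑ l ∈ Finset.range (i - j + 1), (-1 : ℝ) ^ l * (Nat.choose (i - j) l : ℝ)
        = if i - j = 0 then 1 else 0 := by
      have h := Int.alternating_sum_range_choose (n := i - j)
      have := congrArg (fun z : ℤ => (z : ℝ)) h
      push_cast at this
      simpa [mul_one] using this
    rw [this]
    by_cases h : i = j
    · simp [h]
    · have : ¬ (i - j = 0) := by omega
      simp [h, this]
  · have : ¬ (i = j) := by omega
    simp [hij, this]

lemma beta_sum : ∀ (n j : ℕ),
    ∑ l ∈ Finset.range (n + 1), (-1 : ℝ) ^ l * (Nat.choose n l : ℝ) / ((l : ℝ) + j + 1)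
      = (Nat.factorial n : ℝ) * (Nat.factorial j : ℝ) / (Nat.factorial (n + j + 1) : ℝ)
  | 0, j => by
    have hj : (Nat.factorial j : ℝ) ≠ 0 := by
      exact_mod_cast Nat.factorial_ne_zero j
    have hj1 : ((j : ℝ) + 1) ≠ 0 := by positivity
    simp only [Finset.sum_range_one, pow_zero, Nat.choose_self, Nat.cast_one, one_mul,
      Nat.cast_zero, zero_add, Nat.factorial]
    push_cast [Nat.succ_eq_add_one]
    rw [div_eq_div_iff (by positivity) (by positivity)]
    ring
  | (n + 1), j => by
    have IH1 := beta_sum n j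
    have IH2 := beta_sum n (j + 1)
    have hT : ∑ l ∈ Finset.range (n + 1), (-1 : ℝ) ^ l * (Nat.choose n (l + 1) : ℝ) /
          ((l : ℝ) + j + 2)
        = 1 / ((j : ℝ) + 1) - (Nat.factorial n : ℝ) * (Nat.factorial j : ℝ) /
            (Nat.factorial (n + j + 1) : ℝ) := by
      rw [← IH1, Finset.sum_range_succ' (fun l => (-1 : ℝ) ^ l * (Nat.choose n l : ℝ) /
        ((l : ℝ) + j + 1)), Finset.sum_range_succ
        (fun l => (-1 : ℝ) ^ l * (Nat.choose n (l + 1) : ℝ) / ((l : ℝ) + j + 2))]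
      simp only [Nat.choose_zero_right, Nat.choose_succ_self, Nat.cast_zero, Nat.cast_one,
        pow_zero, one_mul, mul_zero, zero_div, add_zero, zero_add]
      have : ∀ l : ℕ, (-1 : ℝ) ^ (l + 1) * (Nat.choose n (l + 1) : ℝ) / (((l : ℕ) + 1 : ℕ) + j + 1)
          = -((-1 : ℝ) ^ l * (Nat.choose n (l + 1) : ℝ) / ((l : ℝ) + j + 2)) := by
        intro l
        push_cast
        ring
      rw [Finset.sum_congr rfl fun l _ => this l, Finset.sum_neg_distrib]
      ring
    rw [Finset.sum_range_succ' (fun l => (-1 : ℝ) ^ l * (Nat.choose (n + 1) l : ℝ) /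
      ((l : ℝ) + j + 1))]
    have hsplit : ∀ l : ℕ, (-1 : ℝ) ^ (l + 1) * (Nat.choose (n + 1) (l + 1) : ℝ) /
          (((l : ℕ) + 1 : ℕ) + j + 1)
        = -((-1 : ℝ) ^ l * (Nat.choose n l : ℝ) / ((l : ℝ) + j + 2))
          - ((-1 : ℝ) ^ l * (Nat.choose n (l + 1) : ℝ) / ((l : ℝ) + j + 2)) := by
      intro l
      rw [Nat.choose_succ_succ']
      push_cast
      ring
    rw [Finset.sum_congr rfl fun l _ => hsplit l, Finset.sum_sub_distrib,
      Finset.sum_neg_distrib, hT]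
    have hB : ∑ l ∈ Finset.range (n + 1), (-1 : ℝ) ^ l * (Nat.choose n l : ℝ) / ((l : ℝ) + j + 2)
        = (Nat.factorial n : ℝ) * (Nat.factorial (j + 1) : ℝ) /
            (Nat.factorial (n + (j + 1) + 1) : ℝ) := by
      rw [← IH2]
      apply Finset.sum_congr rfl
      intro l _
      push_cast
      ring_nf
    rw [hB]
    have h1 : (Nat.factorial (n + j + 1) : ℝ) ≠ 0 := by
      exact_mod_cast Nat.factorial_ne_zero _
    have h2 : (Nat.factorial (n + (j + 1) + 1) : ℝ) ≠ 0 := by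
      exact_mod_cast Nat.factorial_ne_zero _
    have h3 : ((j : ℝ) + 1) ≠ 0 := by positivity
    have e1 : (Nat.factorial (n + (j + 1) + 1) : ℝ)
        = ((n : ℝ) + j + 2) * (Nat.factorial (n + j + 1) : ℝ) := by
      rw [show n + (j + 1) + 1 = (n + j + 1) + 1 from by omega, Nat.factorial_succ]
      push_cast
      ring
    have e2 : (Nat.factorial (j + 1) : ℝ) = ((j : ℝ) + 1) * (Nat.factorial j : ℝ) := by
      rw [Nat.factorial_succ]; push_cast; ring
    have e3 : (Nat.factorial (n + 1 + j + 1) : ℝ)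
        = ((n : ℝ) + j + 2) * (Nat.factorial (n + j + 1) : ℝ) := by
      rw [show n + 1 + j + 1 = (n + j + 1) + 1 from by omega, Nat.factorial_succ]
      push_cast
      ring
    have e4 : (Nat.factorial (n + 1) : ℝ) = ((n : ℝ) + 1) * (Nat.factorial n : ℝ) := by
      rw [Nat.factorial_succ]; push_cast; ring
    rw [e1, e2, e3, e4]
    have h4 : ((n : ℝ) + j + 2) ≠ 0 := by positivity
    simp only [Nat.cast_zero, zero_add, pow_zero, one_mul, Nat.choose_zero_right, Nat.cast_one]
    field_simp
    ring

noncomputable def muRt (k : ℕ) : ℝ := 1 / Real.sqrt ((k : ℝ) + 1)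

lemma root_eq (i j : ℕ) :
    cesaroRootEntry i j = ∑ k ∈ Finset.range (i + 1), dEnt i k * muRt k * dEnt k j := by
  rw [sum_delta muRt i j, cesaroRootEntry]
  by_cases hij : j ≤ i
  · rw [if_pos hij, if_pos hij]
    congr 1
    apply Finset.sum_congr rfl
    intro l _
    have : ((l : ℝ) + j + 1) = ((j + l : ℕ) : ℝ) + 1 := by push_cast; ring
    rw [muRt, this]
  · rw [if_neg hij, if_neg hij]

lemma mu_sq (k : ℕ) : muRt k * muRt k = 1 / ((k : ℝ) + 1) := by
  rw [muRt, div_mul_div_comm, one_mul, Real.mul_self_sqrt (by positivity)]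

lemma delta_mul' (i a b : ℕ) (ha : a ≤ i) :
    ∑ k ∈ Finset.range (i + 1), dEnt a k * dEnt k b
      = if a = b then 1 else 0 := by
  rw [← delta_mul a b]
  symm
  apply Finset.sum_subset
  · intro k hk; simp only [Finset.mem_range] at *; omega
  · intro k hk hk'
    simp only [Finset.mem_range] at *
    have : ¬ k ≤ a := by omega
    rw [dEnt, if_neg this, zero_mul]

theorem stmt_18 (i j : ℕ) (hij : j ≤ i) :
    ∑ k ∈ Finset.Icc j i, cesaroRootEntry i k * cesaroRootEntry k j
      = 1 / ((i : ℝ) + 1) := by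
  have hIcc : ∑ k ∈ Finset.Icc j i, cesaroRootEntry i k * cesaroRootEntry k j
      = ∑ k ∈ Finset.range (i + 1), cesaroRootEntry i k * cesaroRootEntry k j := by
    apply Finset.sum_subset
    · intro k hk; simp only [Finset.mem_Icc, Finset.mem_range] at *; omega
    · intro k hk hk'
      simp only [Finset.mem_Icc, Finset.mem_range] at *
      have : ¬ j ≤ k := by omega
      have h0 : cesaroRootEntry k j = 0 := by rw [cesaroRootEntry, if_neg this]
      rw [h0, mul_zero]
  rw [hIcc]
  have step1 : ∀ k ∈ Finset.range (i + 1),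
      cesaroRootEntry i k * cesaroRootEntry k j
        = ∑ a ∈ Finset.range (i + 1), ∑ b ∈ Finset.range (i + 1),
            (dEnt i a * muRt a * dEnt a k) * (dEnt k b * muRt b * dEnt b j) := by
    intro k hk
    simp only [Finset.mem_range] at hk
    rw [root_eq, root_eq]
    have hext : ∑ b ∈ Finset.range (k + 1), dEnt k b * muRt b * dEnt b j
        = ∑ b ∈ Finset.range (i + 1), dEnt k b * muRt b * dEnt b j := by
      apply Finset.sum_subset
      · intro b hb; simp only [Finset.mem_range] at *; omega
      · intro b hb hb'
        simp only [Finset.mem_range] at *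
        have : ¬ b ≤ k := by omega
        rw [dEnt, if_neg this, zero_mul, zero_mul]
    rw [hext, Finset.sum_mul_sum]
  rw [Finset.sum_congr rfl step1, Finset.sum_comm]
  have step2 : ∀ a ∈ Finset.range (i + 1),
      ∑ k ∈ Finset.range (i + 1), ∑ b ∈ Finset.range (i + 1),
          (dEnt i a * muRt a * dEnt a k) * (dEnt k b * muRt b * dEnt b j)
        = ∑ b ∈ Finset.range (i + 1),
            (dEnt i a * muRt a) * (muRt b * dEnt b j) *
              (if a = b then 1 else 0) := by
    intro a ha
    simp only [Finset.mem_range] at ha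
    rw [Finset.sum_comm]
    apply Finset.sum_congr rfl
    intro b _
    rw [← delta_mul' i a b (by omega), Finset.mul_sum]
    apply Finset.sum_congr rfl
    intro k _
    ring
  rw [Finset.sum_congr rfl step2]
  have step3 : ∀ a ∈ Finset.range (i + 1),
      ∑ b ∈ Finset.range (i + 1),
          (dEnt i a * muRt a) * (muRt b * dEnt b j) * (if a = b then 1 else 0)
        = dEnt i a * (1 / ((a : ℝ) + 1)) * dEnt a j := by
    intro a ha
    rw [Finset.sum_eq_single a]
    · rw [if_pos rfl, mul_one, ← mu_sq]
      ring
    · intro b _ hb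
      rw [if_neg (fun h => hb h.symm), mul_zero]
    · intro h
      exact absurd ha h
  rw [Finset.sum_congr rfl step3, sum_delta (fun a => 1 / ((a : ℝ) + 1)) i j, if_pos hij]
  have step4 : ∑ l ∈ Finset.range (i - j + 1),
        (-1 : ℝ) ^ l * (1 / (((j + l : ℕ) : ℝ) + 1)) * (Nat.choose (i - j) l : ℝ)
      = ∑ l ∈ Finset.range (i - j + 1),
        (-1 : ℝ) ^ l * (Nat.choose (i - j) l : ℝ) / ((l : ℝ) + j + 1) := by
    apply Finset.sum_congr rfl
    intro l _
    push_cast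
    ring
  rw [step4, beta_sum (i - j) j, show i - j + j + 1 = i + 1 from by omega]
  have key : ((Nat.choose i j : ℝ) * (Nat.factorial j : ℝ) * (Nat.factorial (i - j) : ℝ))
      = (Nat.factorial i : ℝ) := by
    exact_mod_cast congrArg (Nat.cast (R := ℝ))
      (Nat.choose_mul_factorial_mul_factorial hij)
  have hfac : (Nat.factorial (i + 1) : ℝ) = ((i : ℝ) + 1) * (Nat.factorial i : ℝ) := by
    rw [Nat.factorial_succ]; push_cast; ring
  have hi : ((i : ℝ) + 1) ≠ 0 := by positivity
  have hfi : (Nat.factorial i : ℝ) ≠ 0 := by exact_mod_cast Nat.factorial_ne_zero i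
  rw [hfac]
  calc (Nat.choose i j : ℝ) * ((Nat.factorial (i - j) : ℝ) * (Nat.factorial j : ℝ) /
        (((i : ℝ) + 1) * (Nat.factorial i : ℝ)))
      = ((Nat.choose i j : ℝ) * (Nat.factorial j : ℝ) * (Nat.factorial (i - j) : ℝ)) /
        (((i : ℝ) + 1) * (Nat.factorial i : ℝ)) := by ring
    _ = (Nat.factorial i : ℝ) / (((i : ℝ) + 1) * (Nat.factorial i : ℝ)) := by rw [key]
    _ = 1 / ((i : ℝ) + 1) := by
        rw [div_eq_div_iff (by positivity) hi]
        ring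
end
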